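/- In genus 3, for any azygetic triple of odd characteristics m₁, m₂, m₃, there are exactly 6 even characteristics n such that the quadruple (m₁, m₂, m₃, n) is azygetic, and the sum m₁+m₂+m₃ is one of these six. -/
import Mathlib

open Finset

/-- The space of theta characteristics in genus `g`: pairs `(m', m'')` of vectors in `F_2^g`. -/
abbrev V (g : ℕ) := (Fin g → ZMod 2) × (Fin g → ZMod 2)

/-- The `F_2`-inner product of two vectors. -/
def dotp {g : ℕ} (a b : Fin g → ZMod 2) : ZMod 2 := ∑ i, a i * b i

/-- The parity invariant `m'·m'' ∈ F_2`; `m` is even iff `par m = 0`. -/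
def par {g : ℕ} (m : V g) : ZMod 2 := dotp m.1 m.2

/-- The sign `e(m) = (-1)^{m'·m''}`. -/
def e {g : ℕ} (m : V g) : ℤ := (-1) ^ (par m).val

/-- The syzygy invariant `e(m₁,m₂,m₃) = e(m₁)e(m₂)e(m₃)e(m₁+m₂+m₃)`. -/
def e3 {g : ℕ} (m₁ m₂ m₃ : V g) : ℤ := e m₁ * e m₂ * e m₃ * e (m₁ + m₂ + m₃)

/-- The standard symplectic form `⟨m,n⟩ = m'·n'' + m''·n'` on `F_2^{2g}`. -/
def sp {g : ℕ} (m n : V g) : ZMod 2 := dotp m.1 n.2 + dotp m.2 n.1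

/-! ### Auxiliary machinery -/

/-- The quadratic character `χ(x) = (-1)^x`. -/
def chi (x : ZMod 2) : ℤ := (-1) ^ x.val

lemma chi_add (x y : ZMod 2) : chi (x + y) = chi x * chi y := by revert x y; decide
lemma chi_one' : chi 1 = -1 := by decide
lemma chi_eq_neg_one {x : ZMod 2} : chi x = -1 ↔ x = 1 := by revert x; decide

lemma e_eq_chi (m : V 3) : e m = chi (par m) := rfl

lemma e3_eq_chi (a b c : V 3) :
    e3 a b c = chi (par a + par b + par c + par (a + b + c)) := by
  simp [e3, e_eq_chi, chi_add]

lemma dotp_add_right {g : ℕ} (a b c : Fin g → ZMod 2) :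
    dotp a (b + c) = dotp a b + dotp a c := by
  simp [dotp, mul_add, Finset.sum_add_distrib]

lemma dotp_add_left' {g : ℕ} (a b c : Fin g → ZMod 2) :
    dotp (a + b) c = dotp a c + dotp b c := by
  simp [dotp, add_mul, Finset.sum_add_distrib]

lemma dotp_single (v : Fin 3 → ZMod 2) (i : Fin 3) :
    dotp v (Pi.single i 1) = v i := by
  simp [dotp, Pi.single_apply, mul_ite]

lemma par_add (u v : V 3) : par (u + v) = par u + par v + sp u v := by
  simp only [par, sp]
  show dotp (u.1 + v.1) (u.2 + v.2) = _
  simp [dotp, add_mul, mul_add, Finset.sum_add_distrib, mul_comm]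
  ring

lemma sp_add_left (a b u : V 3) : sp (a + b) u = sp a u + sp b u := by
  simp [sp, dotp_add_left']; ring

lemma sp_add_right (u a b : V 3) : sp u (a + b) = sp u a + sp u b := by
  simp [sp, dotp_add_right]; ring

lemma add_self_V (x : V 3) : x + x = 0 := by
  have h : ∀ y : ZMod 2, y + y = 0 := by decide
  refine Prod.ext ?_ ?_ <;> funext i <;> simp [h]

lemma add_add_cancel_V (x y : V 3) : x + y + y = x := by
  rw [add_assoc, add_self_V, add_zero]

lemma add_eq_zero_iff_V {x y : V 3} : x + y = 0 ↔ x = y := by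
  constructor
  · intro h
    have := congrArg (· + y) h
    simpa [add_add_cancel_V] using this
  · rintro rfl; exact add_self_V x

lemma shift3_1 (u a b c : V 3) : u + (a + b + c) + a + b = u + c := by
  have h : ∀ x p q r : ZMod 2, x + (p + q + r) + p + q = x + r := by decide
  refine Prod.ext ?_ ?_ <;> funext i <;> exact h _ _ _ _

lemma shift3_2 (u a b c : V 3) : u + (a + b + c) + a + c = u + b := by
  have h : ∀ x p q r : ZMod 2, x + (p + q + r) + p + r = x + q := by decide
  refine Prod.ext ?_ ?_ <;> funext i <;> exact h _ _ _ _

lemma shift3_3 (u a b c : V 3) : u + (a + b + c) + b + c = u + a := by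
  have h : ∀ x p q r : ZMod 2, x + (p + q + r) + q + r = x + p := by decide
  refine Prod.ext ?_ ?_ <;> funext i <;> exact h _ _ _ _

lemma sum3_add_1_2 (a b c : V 3) : a + b + c + a + b = c := by
  have := shift3_1 0 a b c
  simpa using this

lemma sum3_add_1_3 (a b c : V 3) : a + b + c + a + c = b := by
  have := shift3_2 0 a b c
  simpa using this

lemma sum3_add_2_3 (a b c : V 3) : a + b + c + b + c = a := by
  have := shift3_3 0 a b c
  simpa using this

/-- key linear character sum -/
lemma Lsum (v : Fin 3 → ZMod 2) :
    ∑ w : Fin 3 → ZMod 2, chi (dotp v w) = if v = 0 then 8 else 0 := by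
  by_cases hv : v = 0
  · subst hv
    simp [dotp, chi]
  · simp only [hv, if_false]
    obtain ⟨i, hi⟩ : ∃ i, v i ≠ 0 := by
      by_contra h
      push_neg at h
      exact hv (funext fun i => h i)
    have hvi : v i = 1 := by
      have : ∀ x : ZMod 2, x ≠ 0 → x = 1 := by decide
      exact this _ hi
    have hS : ∑ w : Fin 3 → ZMod 2, chi (dotp v (w + Pi.single i 1))
        = ∑ w : Fin 3 → ZMod 2, chi (dotp v w) :=
      (Fintype.sum_equiv (Equiv.addRight (Pi.single i 1)) _ _ (fun w => rfl))
    have hneg : ∀ w : Fin 3 → ZMod 2,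
        chi (dotp v (w + Pi.single i 1)) = - chi (dotp v w) := by
      intro w
      rw [dotp_add_right, dotp_single, hvi, chi_add, chi_one']; ring
    simp only [hneg, Finset.sum_neg_distrib] at hS
    linarith

/-- S0 : full Gauss sum of the parity quadratic form in genus 3. -/
lemma S0 : ∑ u : V 3, chi (par u) = 8 := by
  rw [Fintype.sum_prod_type]
  have h : ∀ a : Fin 3 → ZMod 2,
      ∑ b : Fin 3 → ZMod 2, chi (par (a, b)) = if a = 0 then 8 else 0 := by
    intro a
    rw [← Lsum a]
    rfl
  rw [Finset.sum_congr rfl (fun a _ => h a)]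
  simp

/-- S1 : twisted Gauss sum. -/
lemma S1 (m : V 3) : ∑ u : V 3, chi (par u + sp u m) = 8 * chi (par m) := by
  have key : ∀ u : V 3, chi (par (u + m)) = chi (par u + sp u m) * chi (par m) := by
    intro u
    rw [par_add, chi_add, chi_add, chi_add]
    ring
  have hS : ∑ u : V 3, chi (par (u + m)) = ∑ u : V 3, chi (par u) :=
    Fintype.sum_equiv (Equiv.addRight m) _ _ (fun u => rfl)
  rw [S0] at hS
  have hsum : ∑ u : V 3, chi (par u + sp u m) * chi (par m) = 8 := by
    rw [← Finset.sum_congr rfl (fun u _ => key u), hS]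
  rw [← Finset.sum_mul] at hsum
  have hchi : chi (par m) = 1 ∨ chi (par m) = -1 := by
    have : ∀ x : ZMod 2, chi x = 1 ∨ chi x = -1 := by decide
    exact this _
  rcases hchi with h | h <;> rw [h] at hsum ⊢ <;> linarith

/-- S2 : nontrivial linear character sums vanish. -/
lemma S2 (a : V 3) (ha : a ≠ 0) : ∑ u : V 3, chi (sp u a) = 0 := by
  obtain ⟨v, hv⟩ : ∃ v : V 3, sp v a = 1 := by
    by_cases h1 : a.1 = 0
    · have h2 : a.2 ≠ 0 := fun h2 => ha (Prod.ext h1 h2)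
      obtain ⟨i, hi⟩ : ∃ i, a.2 i ≠ 0 := by
        by_contra h; push_neg at h; exact h2 (funext fun i => h i)
      have hvi : a.2 i = 1 := by
        have : ∀ x : ZMod 2, x ≠ 0 → x = 1 := by decide
        exact this _ hi
      refine ⟨(Pi.single i 1, 0), ?_⟩
      simp [sp, dotp, Pi.single_apply, ite_mul, hvi]
    · obtain ⟨i, hi⟩ : ∃ i, a.1 i ≠ 0 := by
        by_contra h; push_neg at h; exact h1 (funext fun i => h i)
      have hvi : a.1 i = 1 := by
        have : ∀ x : ZMod 2, x ≠ 0 → x = 1 := by decide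
        exact this _ hi
      refine ⟨(0, Pi.single i 1), ?_⟩
      simp [sp, dotp, Pi.single_apply, ite_mul, hvi]
  have hS : ∑ u : V 3, chi (sp (u + v) a) = ∑ u : V 3, chi (sp u a) :=
    Fintype.sum_equiv (Equiv.addRight v) _ _ (fun u => rfl)
  have hneg : ∀ u : V 3, chi (sp (u + v) a) = - chi (sp u a) := by
    intro u
    rw [sp_add_left, hv, chi_add, chi_one']; ring
  simp only [hneg, Finset.sum_neg_distrib] at hS
  linarith

theorem genus3_six_even_completions (m₁ m₂ m₃ : V 3)
    (h₁ : par m₁ = 1) (h₂ : par m₂ = 1) (h₃ : par m₃ = 1)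
    (haz : e3 m₁ m₂ m₃ = -1) :
    (univ.filter (fun n : V 3 => par n = 0 ∧ e3 n m₁ m₂ = -1 ∧ e3 n m₁ m₃ = -1 ∧
        e3 n m₂ m₃ = -1)).card = 6 ∧
    m₁ + m₂ + m₃ ∈
      univ.filter (fun n : V 3 => par n = 0 ∧ e3 n m₁ m₂ = -1 ∧ e3 n m₁ m₃ = -1 ∧
        e3 n m₂ m₃ = -1) := by
  set M : V 3 := m₁ + m₂ + m₃ with hMdef
  -- parity of the sum
  have hM : par M = 0 := by
    rw [e3_eq_chi, h₁, h₂, h₃, ← hMdef, chi_eq_neg_one] at haz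
    revert haz
    generalize par M = x
    revert x; decide
  -- pairwise distinctness
  have hne12 : m₁ + m₂ ≠ (0 : V 3) := by
    intro h
    rw [add_eq_zero_iff_V] at h
    rw [e3_eq_chi, h₁, h₂, h₃, h] at haz
    rw [show m₂ + m₂ + m₃ = m₃ from by rw [add_self_V, zero_add]] at haz
    rw [h₃, chi_eq_neg_one] at haz
    revert haz; decide
  have hne13 : m₁ + m₃ ≠ (0 : V 3) := by
    intro h
    rw [add_eq_zero_iff_V] at h
    rw [e3_eq_chi, h₁, h₂, h₃, h] at haz
    rw [show m₃ + m₂ + m₃ = m₂ from by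
      rw [show m₃ + m₂ + m₃ = m₂ + m₃ + m₃ from by ring, add_add_cancel_V]] at haz
    rw [h₂, chi_eq_neg_one] at haz
    revert haz; decide
  have hne23 : m₂ + m₃ ≠ (0 : V 3) := by
    intro h
    rw [add_eq_zero_iff_V] at h
    rw [e3_eq_chi, h₁, h₂, h₃, h] at haz
    rw [show m₁ + m₃ + m₃ = m₁ from add_add_cancel_V _ _] at haz
    rw [h₁, chi_eq_neg_one] at haz
    revert haz; decide
  -- the key pointwise equivalence after shifting by M
  have key : ∀ u : V 3,
      (par (u + M) = 0 ∧ e3 (u + M) m₁ m₂ = -1 ∧ e3 (u + M) m₁ m₃ = -1 ∧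
        e3 (u + M) m₂ m₃ = -1)
      ↔ (sp u m₁ + par u = 0 ∧ sp u m₂ + par u = 0 ∧ sp u m₃ + par u = 0) := by
    intro u
    have r1 : u + M + m₁ + m₂ = u + m₃ := shift3_1 u m₁ m₂ m₃
    have r2 : u + M + m₁ + m₃ = u + m₂ := shift3_2 u m₁ m₂ m₃
    have r3 : u + M + m₂ + m₃ = u + m₁ := shift3_3 u m₁ m₂ m₃
    rw [e3_eq_chi, e3_eq_chi, e3_eq_chi, r1, r2, r3,
      chi_eq_neg_one, chi_eq_neg_one, chi_eq_neg_one,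
      par_add u M, par_add u m₁, par_add u m₂, par_add u m₃, hM, h₁, h₂, h₃]
    rw [show sp u M = sp u m₁ + sp u m₂ + sp u m₃ from by
      rw [hMdef, sp_add_right, sp_add_right]]
    generalize par u = q
    generalize sp u m₁ = t₁
    generalize sp u m₂ = t₂
    generalize sp u m₃ = t₃
    revert q t₁ t₂ t₃; decide
  -- shift bijection
  have hcard1 :
      (univ.filter (fun n : V 3 => par n = 0 ∧ e3 n m₁ m₂ = -1 ∧ e3 n m₁ m₃ = -1 ∧
        e3 n m₂ m₃ = -1)).card
      = (univ.filter (fun u : V 3 => par (u + M) = 0 ∧ e3 (u + M) m₁ m₂ = -1 ∧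
          e3 (u + M) m₁ m₃ = -1 ∧ e3 (u + M) m₂ m₃ = -1)).card := by
    apply Finset.card_bij' (fun n _ => n + M) (fun u _ => u + M)
    · intro a ha
      simp only [Finset.mem_filter, Finset.mem_univ, true_and] at ha ⊢
      rwa [add_add_cancel_V]
    · intro a ha
      simp only [Finset.mem_filter, Finset.mem_univ, true_and] at ha ⊢
      exact ha
    · intro a _
      exact add_add_cancel_V a M
    · intro a _
      exact add_add_cancel_V a M
  -- counting the shifted set via character sums
  have hcount :
      (univ.filter (fun u : V 3 => sp u m₁ + par u = 0 ∧ sp u m₂ + par u = 0 ∧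
        sp u m₃ + par u = 0)).card = 6 := by
    have point : ∀ x₁ x₂ x₃ : ZMod 2,
        (if x₁ = 0 ∧ x₂ = 0 ∧ x₃ = 0 then (8 : ℤ) else 0)
        = (1 + chi x₁) * (1 + chi x₂) * (1 + chi x₃) := by decide
    have expand : ∀ u : V 3,
        (1 + chi (sp u m₁ + par u)) * (1 + chi (sp u m₂ + par u)) *
          (1 + chi (sp u m₃ + par u))
        = 1 + chi (par u + sp u m₁) + chi (par u + sp u m₂) + chi (par u + sp u m₃)
          + chi (sp u (m₁ + m₂)) + chi (sp u (m₁ + m₃)) + chi (sp u (m₂ + m₃))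
          + chi (par u + sp u M) := by
      intro u
      rw [sp_add_right u m₁ m₂, sp_add_right u m₁ m₃, sp_add_right u m₂ m₃,
        show sp u M = sp u m₁ + sp u m₂ + sp u m₃ from by
          rw [hMdef, sp_add_right, sp_add_right]]
      generalize par u = q
      generalize sp u m₁ = t₁
      generalize sp u m₂ = t₂
      generalize sp u m₃ = t₃
      revert q t₁ t₂ t₃; decide
    have hsum : ∑ u : V 3, (if sp u m₁ + par u = 0 ∧ sp u m₂ + par u = 0 ∧
        sp u m₃ + par u = 0 then (8 : ℤ) else 0) = 48 := by
      calc ∑ u : V 3, (if sp u m₁ + par u = 0 ∧ sp u m₂ + par u = 0 ∧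
              sp u m₃ + par u = 0 then (8 : ℤ) else 0)
          = ∑ u : V 3, (1 + chi (par u + sp u m₁) + chi (par u + sp u m₂)
              + chi (par u + sp u m₃) + chi (sp u (m₁ + m₂)) + chi (sp u (m₁ + m₃))
              + chi (sp u (m₂ + m₃)) + chi (par u + sp u M)) := by
            refine Finset.sum_congr rfl fun u _ => ?_
            rw [point, expand]
        _ = 48 := by
            simp only [Finset.sum_add_distrib, Finset.sum_const, Finset.card_univ,
              S1, S2 _ hne12, S2 _ hne13, S2 _ hne23, h₁, h₂, h₃, hM]
            norm_num [chi_one', chi]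
            decide
    rw [← Finset.sum_filter] at hsum
    rw [Finset.sum_const, nsmul_eq_mul] at hsum
    omega
  constructor
  · rw [hcard1]
    rw [Finset.filter_congr (fun u _ => key u), hcount]
  · simp only [Finset.mem_filter, Finset.mem_univ, true_and]
    refine ⟨hM, ?_, ?_, ?_⟩
    · rw [e3_eq_chi, hM, h₁, h₂,
        show M + m₁ + m₂ = m₃ from by rw [hMdef]; exact sum3_add_1_2 m₁ m₂ m₃, h₃,
        chi_eq_neg_one]
      decide
    · rw [e3_eq_chi, hM, h₁, h₃,
        show M + m₁ + m₃ = m₂ from by rw [hMdef]; exact sum3_add_1_3 m₁ m₂ m₃, h₂,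
        chi_eq_neg_one]
      decide
    · rw [e3_eq_chi, hM, h₂, h₃,
        show M + m₂ + m₃ = m₁ from by rw [hMdef]; exact sum3_add_2_3 m₁ m₂ m₃, h₁,
        chi_eq_neg_one]
      decide
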